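/- Let L(z) = M_T(z/2)·M_V(z)·M_T(z/2) be the leapfrog matrix for the harmonic oscillator, let α = 1/2 + (√3/6)·i, and let R(h) be the entrywise real part of L(α h)·L(conj(α) h). Then (fun h : ℝ => det R(h) − 1) is O(h⁸) as h → 0; that is, the projected fourth-order method R̂⁴ is pseudo-symplectic of order 7 for the harmonic oscillator. -/
import Mathlib

open Matrix Asymptotics Filter

attribute [local instance] Matrix.normedAddCommGroup Matrix.normedSpace

/-- Exact evolution matrix of the harmonic oscillator `q' = p`, `p' = -q`. -/
noncomputable def MH (z : ℂ) : Matrix (Fin 2) (Fin 2) ℂ :=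
  !![Complex.cos z, Complex.sin z; -Complex.sin z, Complex.cos z]

/-- Exact evolution matrix of the kinetic part. -/
def MT (z : ℂ) : Matrix (Fin 2) (Fin 2) ℂ := !![1, z; 0, 1]

/-- Exact evolution matrix of the potential part. -/
def MV (z : ℂ) : Matrix (Fin 2) (Fin 2) ℂ := !![1, 0; -z, 1]

/-- The leapfrog/Strang splitting matrix. -/
noncomputable def L (z : ℂ) : Matrix (Fin 2) (Fin 2) ℂ := MT (z / 2) * MV z * MT (z / 2)

/-- The coefficient `α = 1/2 + (√3/6) i`. -/
noncomputable def αc : ℂ := 1 / 2 + (Real.sqrt 3 / 6 : ℝ) * Complex.I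

/-- The real projection of the composition `S_{αh} ∘ S_{ᾱh}`. -/
noncomputable def Rproj (h : ℝ) : Matrix (Fin 2) (Fin 2) ℝ :=
  (L (αc * (h : ℂ)) * L (starRingEnd ℂ αc * (h : ℂ))).map Complex.re

set_option maxHeartbeats 1000000 in
lemma L_eq (z : ℂ) : L z = !![1 - z^2/2, z - z^3/4; -z, 1 - z^2/2] := by
  ext i j
  fin_cases i <;> fin_cases j <;>
    simp [L, MT, MV, Matrix.mul_apply, Fin.sum_univ_two] <;> ring

set_option maxHeartbeats 1000000 in
lemma Rproj_eq (h : ℝ) : Rproj h =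
    !![1 - h^2/2 + h^4/24, h - h^3/6 + h^5/72; -h + h^3/6, 1 - h^2/2 + h^4/24] := by
  have e2 : Real.sqrt 3 ^ 2 = 3 := Real.sq_sqrt (by norm_num)
  have e4 : Real.sqrt 3 ^ 4 = 9 := by rw [show (4:ℕ)=2*2 from rfl, pow_mul, e2]; norm_num
  have e6 : Real.sqrt 3 ^ 6 = 27 := by rw [show (6:ℕ)=2*3 from rfl, pow_mul, e2]; norm_num
  have hare : αc.re = 1/2 := by simp [αc]
  have haim : αc.im = Real.sqrt 3 / 6 := by simp [αc]
  have a2re : (αc ^ 2).re = 1/6 := by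
    rw [pow_two, Complex.mul_re, hare, haim]; nlinarith [e2]
  have a2im : (αc ^ 2).im = Real.sqrt 3 / 6 := by
    rw [pow_two, Complex.mul_im, hare, haim]; ring
  have a3re : (αc ^ 3).re = 0 := by
    rw [pow_succ, Complex.mul_re, a2re, a2im, hare, haim]; nlinarith [e2]
  have a3im : (αc ^ 3).im = Real.sqrt 3 / 9 := by
    rw [pow_succ, Complex.mul_im, a2re, a2im, hare, haim]; ring
  have b2re : ((starRingEnd ℂ αc) ^ 2).re = 1/6 := by rw [← map_pow, Complex.conj_re, a2re]
  have b2im : ((starRingEnd ℂ αc) ^ 2).im = -(Real.sqrt 3 / 6) := by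
    rw [← map_pow, Complex.conj_im, a2im]
  have b3re : ((starRingEnd ℂ αc) ^ 3).re = 0 := by
    rw [← map_pow, Complex.conj_re, a3re]
  have b3im : ((starRingEnd ℂ αc) ^ 3).im = -(Real.sqrt 3 / 9) := by
    rw [← map_pow, Complex.conj_im, a3im]
  have hbre : (starRingEnd ℂ αc).re = 1/2 := by rw [Complex.conj_re, hare]
  have hbim : (starRingEnd ℂ αc).im = -(Real.sqrt 3 / 6) := by rw [Complex.conj_im, haim]
  have hpre : ∀ n : ℕ, (((h:ℂ)) ^ n).re = h ^ n := by
    intro n; simp [← Complex.ofReal_pow]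
  have hpim : ∀ n : ℕ, (((h:ℂ)) ^ n).im = 0 := by
    intro n; simp [← Complex.ofReal_pow]
  ext i j
  fin_cases i <;> fin_cases j <;>
    · simp [Rproj, L_eq, Matrix.mul_apply, Fin.sum_univ_two, mul_pow, Complex.add_re,
        Complex.sub_re, Complex.mul_re, Complex.mul_im, Complex.add_im,
        Complex.sub_im, Complex.div_re, Complex.div_im, hare, haim, a2re, a2im,
        a3re, a3im, b2re, b2im, b3re, b3im, hbre, hbim, hpre, hpim]
      ring_nf
      simp only [e2, e4, e6]
      ring_nf

/-- the projected fourth-order method `R̂⁴` is pseudo-symplectic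
of order 7 for the harmonic oscillator. -/
theorem projected_two_stage_composition_pseudo_symplectic_order_seven :
    (fun h : ℝ => (Rproj h).det - 1) =O[nhds 0] fun h : ℝ => h ^ 8 := by
  have key : (fun h : ℝ => (Rproj h).det - 1) = fun h : ℝ => -(1/1728) * h ^ 8 := by
    funext h
    rw [Rproj_eq, Matrix.det_fin_two_of]
    ring
  rw [key]
  exact (isBigO_refl (fun h : ℝ => h ^ 8) _).const_mul_left _
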